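/- Jacobi's imaginary transformation holds: θ₁(z;τ) = -i (-iτ)^{-1/2} exp(-iπ z²/τ) θ₁(-z/τ; -1/τ), where the square root is the principal branch. -/
import Mathlib


open Complex Real BigOperators

/-- The Jacobi theta function `θ₁(z;τ)`. -/
noncomputable def jacobiTheta₁ (z τ : ℂ) : ℂ :=
  -Complex.I * ∑' k : ℤ, (-1 : ℂ) ^ k *
    Complex.exp ((π : ℂ) * Complex.I * τ * ((k : ℂ) + 1 / 2) ^ 2) *
    Complex.exp (2 * (π : ℂ) * Complex.I * ((k : ℂ) + 1 / 2) * z)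

/-- The derivative of `θ₁` with respect to `z`. -/
noncomputable def jacobiTheta₁' (z τ : ℂ) : ℂ :=
  deriv (fun w => jacobiTheta₁ w τ) z

/-- `θ₁` in terms of Mathlib's `jacobiTheta₂`, via a half-period shift. -/
lemma theta₁_eq_theta₂ (z τ : ℂ) :
    jacobiTheta₁ z τ = -Complex.I * Complex.exp ((π : ℂ) * Complex.I * τ / 4 + (π : ℂ) * Complex.I * z) *
      jacobiTheta₂ (z + τ / 2 + 1 / 2) τ := by
  rw [jacobiTheta₁, jacobiTheta₂]
  conv_rhs => rw [mul_assoc, ← tsum_mul_left]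
  congr 1
  refine tsum_congr fun k => ?_
  rw [jacobiTheta₂_term]
  have hk : ((-1 : ℂ)) ^ k = Complex.exp ((k : ℂ) * ((π : ℂ) * Complex.I)) := by
    rw [Complex.exp_int_mul, Complex.exp_pi_mul_I]
  rw [hk, ← Complex.exp_add, ← Complex.exp_add, ← Complex.exp_add]
  congr 1
  ring

/-- Jacobi's imaginary transformation for `θ₁`, with the principal branch of the square root. -/
theorem jacobiTheta₁_imaginary_transformation (z τ : ℂ) (hτ : 0 < τ.im) :
    jacobiTheta₁ z τ =
      -Complex.I * (-Complex.I * τ) ^ (-(1 / 2 : ℂ)) *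
        Complex.exp (-(π : ℂ) * Complex.I * z ^ 2 / τ) *
        jacobiTheta₁ (-z / τ) (-1 / τ) := by
  have h0 : τ ≠ 0 := fun h => by simp [h] at hτ
  rw [theta₁_eq_theta₂ z τ, jacobiTheta₂_functional_equation (z + τ / 2 + 1 / 2) τ,
      theta₁_eq_theta₂ (-z / τ) (-1 / τ)]
  have hpt : (-z / τ + (-1 / τ) / 2 + 1 / 2) = -((z + τ / 2 + 1 / 2) / τ) + 1 := by
    field_simp; ring
  rw [hpt, jacobiTheta₂_add_left, jacobiTheta₂_neg_left, Complex.cpow_neg, one_div]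
  have hI : (-Complex.I) = Complex.exp ((-(π / 2) : ℝ) * Complex.I) := by
    rw [Complex.exp_mul_I]; push_cast; simp
  have key : Complex.exp ((π : ℂ) * Complex.I * τ / 4 + (π : ℂ) * Complex.I * z) *
      Complex.exp (-(π : ℂ) * Complex.I * (z + τ / 2 + 1 / 2) ^ 2 / τ) =
      -Complex.I * (Complex.exp (-(π : ℂ) * Complex.I * z ^ 2 / τ) *
        Complex.exp ((π : ℂ) * Complex.I * (-1 / τ) / 4 + (π : ℂ) * Complex.I * (-z / τ))) := by
    rw [hI, ← Complex.exp_add, ← Complex.exp_add, ← Complex.exp_add]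
    congr 1
    push_cast
    have hinv : τ * τ⁻¹ = 1 := mul_inv_cancel₀ h0
    linear_combination (-((π : ℂ) * Complex.I * τ) / 4 - (π : ℂ) * Complex.I * z
      - (π : ℂ) * Complex.I / 2) * hinv
  linear_combination (-Complex.I * ((-Complex.I * τ) ^ ((1 : ℂ) / 2))⁻¹ *
    jacobiTheta₂ ((z + τ / 2 + 1 / 2) / τ) (-1 / τ)) * key
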